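/- For all β, λ ∈ ℂ and every m ∈ ℕ, one has ∑_{k=0}^{m} D^(1)_k(m) · (β/2−k+1)_{2k} = (λ)_m · (β/2)_m · (λ−β), where D^(1)_k(m) := C(m,k) · (λ−β/2+k+1)_{m−k} · (β/2+k+1)_{m−k−1} · (k(λ+β+2m) + (β/2)(λ−β−2m)) for 0 ≤ k ≤ m−1 (C(m,k) the binomial coefficient), and D^(1)_m(m) := λ−β+2m. -/
import Mathlib


open Finset

/-- Ascending Pochhammer symbol `(a)_k = ∏_{i=0}^{k-1} (a+i)`. -/
noncomputable def poch (a : ℂ) (k : ℕ) : ℂ := ∏ i ∈ Finset.range k, (a + i)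

/-- `R_k(y;α) = ∏_{l=1}^{k} (y - (α-l)(α-l+1))`. -/
noncomputable def Rpoly (y α : ℂ) (k : ℕ) : ℂ :=
  ∏ l ∈ Finset.range k, (y - (α - (l + 1)) * (α - (l + 1) + 1))

/-- `R^(1)_k(y) = ∑_{j=1}^{k} (β/2-k+j+1)_{2(k-j)} (y - (β/2)(β/2+1)) R_{j-1}(y;k)`. -/
noncomputable def R1 (β y : ℂ) (k : ℕ) : ℂ :=
  ∑ j ∈ Finset.Icc 1 k,
    poch (β/2 - k + j + 1) (2*(k - j)) * (y - β/2*(β/2+1)) * Rpoly y k (j-1)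

/-- `s^(-)_m(y)`. -/
noncomputable def sminus (β lam y : ℂ) (m : ℕ) : ℂ :=
  ∑ k ∈ Finset.range (m+1),
    (m.choose k : ℂ) * poch (β/2 - lam - m) (m-k) * poch (-β/2 - m - 1) (m-k) * Rpoly y 0 k

/-- `s^(+)_m(y)`. -/
noncomputable def splus (β lam y : ℂ) (m : ℕ) : ℂ :=
  ∑ k ∈ Finset.range (m+1),
    (m.choose k : ℂ) * poch (β/2 - lam - m) (m-k) * poch (-β/2 - m + 1) (m-k) * Rpoly y 0 k

/-- Coefficients `D^(1)_k(m)`. -/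
noncomputable def D1 (β lam : ℂ) (m k : ℕ) : ℂ :=
  if k = m then lam - β + 2*m
  else (m.choose k : ℂ) * poch (lam - β/2 + k + 1) (m-k) * poch (β/2 + k + 1) (m-k-1) *
    ((k:ℂ)*(lam+β+2*m) + β/2*(lam-β-2*m))

/-- `s^(1)_m(y) = ∑_{k=0}^m D^(1)_k(m) R^(1)_k(y)`. -/
noncomputable def s1 (β lam y : ℂ) (m : ℕ) : ℂ :=
  ∑ k ∈ Finset.range (m+1), D1 β lam m k * R1 β y k

lemma poch_succ (a : ℂ) (n : ℕ) : poch a (n+1) = poch a n * (a + n) :=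
  Finset.prod_range_succ _ n

lemma poch_succ' (a : ℂ) (n : ℕ) : poch a (n+1) = a * poch (a+1) n := by
  rw [poch, Finset.prod_range_succ']
  push_cast
  rw [mul_comm]
  simp only [add_zero]
  congr 1
  exact Finset.prod_congr rfl (fun i _ => by ring)

lemma poch_add (a : ℂ) (s t : ℕ) : poch a (s+t) = poch a s * poch (a + s) t := by
  rw [poch, Finset.prod_range_add, poch, poch]
  congr 1
  exact Finset.prod_congr rfl (fun i _ => by push_cast; ring)

lemma pascal_sum (n : ℕ) (X : ℕ → ℂ) :
    ∑ k ∈ range (n+2), ((n+1).choose k : ℂ) * X k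
      = ∑ k ∈ range (n+1), (n.choose k : ℂ) * X (k+1)
        + ∑ k ∈ range (n+1), (n.choose k : ℂ) * X k := by
  have h2 : ∑ k ∈ range (n+2), (n.choose k : ℂ) * X k
      = ∑ k ∈ range (n+1), (n.choose (k+1) : ℂ) * X (k+1) + (n.choose 0 : ℂ) * X 0 :=
    Finset.sum_range_succ' _ _
  have h3 : ∑ k ∈ range (n+2), (n.choose k : ℂ) * X k
      = ∑ k ∈ range (n+1), (n.choose k : ℂ) * X k := by
    rw [Finset.sum_range_succ, Nat.choose_eq_zero_of_lt (by omega), Nat.cast_zero, zero_mul,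
      add_zero]
  rw [Finset.sum_range_succ' (fun k => ((n+1).choose k : ℂ) * X k)]
  have h4 : ∀ k, (((n+1).choose (k+1) : ℕ) : ℂ) = (n.choose k : ℂ) + (n.choose (k+1) : ℂ) := by
    intro k; rw [Nat.choose_succ_succ]; push_cast; ring
  simp only [h4, add_mul]
  rw [Finset.sum_add_distrib]
  have h5 : (((n+1).choose 0 : ℕ) : ℂ) * X 0 = (n.choose 0 : ℂ) * X 0 := by simp
  rw [h5, add_assoc, ← h2, h3]

lemma Flem (m : ℕ) : ∀ (c b : ℂ) (r : ℕ),
    ∑ k ∈ range (m+1), (m.choose k : ℂ) *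
        (poch (c + k + 1) (m-k) * poch (b - r - k) (m+k+r))
      = poch (b + c - r) m * poch (b - r) (m + r) := by
  induction m with
  | zero => intro c b r; simp [poch]
  | succ n IH =>
    intro c b r
    have key := pascal_sum n (fun k => poch (c + k + 1) (n+1-k) * poch (b - r - k) (n+1+k+r))
    rw [show n+1+1 = n+2 from rfl, key]
    have e1 : ∀ k ∈ range (n+1), (n.choose k : ℂ) *
        (poch (c + ↑(k+1) + 1) (n+1-(k+1)) * poch (b - r - ↑(k+1)) (n+1+(k+1)+r))
        = (b + n) * ((n.choose k : ℂ) *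
          (poch ((c+1) + k + 1) (n-k) * poch (b - ↑(r+1) - k) (n+k+(r+1)))) := by
      intro k hk
      have h1 : n+1-(k+1) = n-k := by omega
      have h2 : n+1+(k+1)+r = (n+k+(r+1))+1 := by omega
      rw [h1, h2, poch_succ]
      rw [show (c + ↑(k+1) + 1 : ℂ) = (c+1) + k + 1 by push_cast; ring]
      rw [show (b - ↑r - ↑(k+1) : ℂ) = b - ↑(r+1) - ↑k by push_cast; ring]
      push_cast
      ring
    have e2 : ∀ k ∈ range (n+1), (n.choose k : ℂ) *
        (poch (c + k + 1) (n+1-k) * poch (b - r - k) (n+1+k+r))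
        = ((c + n + 1) * (b + n)) * ((n.choose k : ℂ) *
          (poch (c + k + 1) (n-k) * poch (b - r - k) (n+k+r))) := by
      intro k hk
      have hk' : k ≤ n := by simp at hk; omega
      have h1 : n+1-k = (n-k)+1 := by omega
      have h2 : n+1+k+r = (n+k+r)+1 := by omega
      rw [h1, h2, poch_succ, poch_succ]
      have h3 : ((n-k : ℕ) : ℂ) = (n : ℂ) - k := by
        push_cast [Nat.cast_sub hk']; ring
      rw [h3]
      push_cast
      ring
    rw [Finset.sum_congr rfl e1, Finset.sum_congr rfl e2, ← Finset.mul_sum, ← Finset.mul_sum,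
      IH (c+1) b (r+1), IH c b r]
    rw [show (b + (c+1) - ↑(r+1) : ℂ) = b + c - r by push_cast; ring]
    rw [show n+(r+1) = (n+r)+1 from rfl, poch_succ']
    rw [show (b - ↑(r+1) + 1 : ℂ) = b - r by push_cast; ring]
    rw [show n+1+r = (n+r)+1 by omega, poch_succ (b - ↑r) (n+r), poch_succ (b + c - ↑r) n]
    push_cast
    ring

lemma Wlem (m : ℕ) : ∀ (c b : ℂ) (r : ℕ),
    ∑ k ∈ range (m+2), ((m+1).choose k : ℂ) *
        ((b + r + k) * poch (c + k + 1) (m+1-k) * poch (b - r - k + 1) (m+k+r))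
      = poch (b + c - r + 1) m * poch (b - r + 1) (m + r) *
          ((b + r) * (b + c - r) + 2*(m+1)*b) := by
  induction m with
  | zero =>
    intro c b r
    rw [show (0:ℕ)+2 = 1+1 from rfl, Finset.sum_range_succ, Finset.sum_range_succ,
      Finset.sum_range_zero]
    simp only [Nat.choose_self, Nat.choose_zero_right, Nat.cast_one, Nat.cast_zero]
    rw [show (0:ℕ)+1-0 = 0+1 from rfl, poch_succ]
    rw [show (0:ℕ)+1-1 = 0 from rfl]
    rw [show (0:ℕ)+0+r = r from by omega, show (0:ℕ)+1+r = r+1 from by omega, poch_succ']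
    rw [show (b - ↑r - 1 + 1 + 1 : ℂ) = b - r + 1 by ring]
    simp only [poch, Finset.prod_range_zero]
    ring
  | succ n IH =>
    intro c b r
    have key := pascal_sum (n+1) (fun k =>
      (b + r + k) * poch (c + k + 1) (n+2-k) * poch (b - r - k + 1) (n+1+k+r))
    rw [show n+1+2 = (n+1)+2 from rfl, show n+1+1 = (n+1)+1 from rfl] at *
    rw [key]
    have e1 : ∀ k ∈ range (n+2), ((n+1).choose k : ℂ) *
        ((b + r + ↑(k+1)) * poch (c + ↑(k+1) + 1) (n+2-(k+1)) *
          poch (b - r - ↑(k+1) + 1) (n+1+(k+1)+r))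
        = (b + (n+1)) * (((n+1).choose k : ℂ) *
          ((b + ↑(r+1) + k) * poch ((c+1) + k + 1) (n+1-k) *
            poch (b - ↑(r+1) - k + 1) (n+k+(r+1)))) := by
      intro k hk
      have h1 : n+2-(k+1) = n+1-k := by omega
      have h2 : n+1+(k+1)+r = (n+k+(r+1))+1 := by omega
      rw [h1, h2, poch_succ]
      rw [show (c + ↑(k+1) + 1 : ℂ) = (c+1) + k + 1 by push_cast; ring]
      rw [show (b - ↑r - ↑(k+1) + 1 : ℂ) = b - ↑(r+1) - ↑k + 1 by push_cast; ring]
      push_cast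
      ring
    have e2 : ∀ k ∈ range (n+2), ((n+1).choose k : ℂ) *
        ((b + r + k) * poch (c + k + 1) (n+2-k) * poch (b - r - k + 1) (n+1+k+r))
        = ((c + (n+1) + 1) * (b + (n+1))) * (((n+1).choose k : ℂ) *
          ((b + r + k) * poch (c + k + 1) (n+1-k) * poch (b - r - k + 1) (n+k+r))) := by
      intro k hk
      have hk' : k ≤ n+1 := by simp at hk; omega
      have h1 : n+2-k = (n+1-k)+1 := by omega
      have h2 : n+1+k+r = (n+k+r)+1 := by omega
      rw [h1, h2, poch_succ, poch_succ]
      have h3 : ((n+1-k : ℕ) : ℂ) = (n : ℂ) + 1 - k := by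
        push_cast [Nat.cast_sub hk']; ring
      rw [h3]
      push_cast
      ring
    rw [Finset.sum_congr rfl e1, Finset.sum_congr rfl e2, ← Finset.mul_sum, ← Finset.mul_sum,
      IH (c+1) b (r+1), IH c b r]
    rw [show (b + (c+1) - ↑(r+1) + 1 : ℂ) = b + c - r + 1 by push_cast; ring]
    rw [show n+(r+1) = (n+r)+1 from rfl, poch_succ']
    rw [show (b - ↑(r+1) + 1 + 1 : ℂ) = b - r + 1 by push_cast; ring]
    rw [show n+1+r = (n+r)+1 by omega, poch_succ (b - ↑r + 1) (n+r),
      poch_succ (b + c - ↑r + 1) n]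
    push_cast
    ring

/-- Lemma A.1, second identity: `∑_k D^(1)_k(m)(β/2-k+1)_{2k} = (λ)_m (β/2)_m (λ-β)`. -/
theorem sum_D1_poch (β lam : ℂ) (m : ℕ) :
    ∑ k ∈ Finset.range (m+1), D1 β lam m k * poch (β/2 - (k:ℂ) + 1) (2*k)
      = poch lam m * poch (β/2) m * (lam - β) := by
  cases m with
  | zero => simp [D1, poch]
  | succ M =>
    set b : ℂ := β/2 with hb
    set c : ℂ := lam - β/2 with hc
    have hW := Wlem M c b 0
    have hF := Flem (M+1) c b 0
    simp only [Nat.cast_zero, add_zero, sub_zero, Nat.add_zero] at hW hF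
    have hbc : b + c = lam := by rw [hb, hc]; ring
    rw [hbc] at hW hF
    -- termwise rewrite
    have e : ∀ k ∈ range (M+1+1), D1 β lam (M+1) k * poch (β/2 - (k:ℂ) + 1) (2*k)
        = lam * (((M+1).choose k : ℂ) *
            ((b + k) * poch (c + k + 1) (M+1-k) * poch (b - k + 1) (M+k)))
          - 2*(b + ↑(M+1)) * (((M+1).choose k : ℂ) *
            (poch (c + k + 1) (M+1-k) * poch (b - k) (M+1+k))) := by
      intro k hk
      have hk' : k ≤ M+1 := by simp at hk; omega
      by_cases hkm : k = M+1
      · subst hkm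
        rw [D1, if_pos rfl]
        rw [show M+1-(M+1) = 0 from by omega, show M+(M+1) = (2*M)+1 from by omega,
          show M+1+(M+1) = ((2*M)+1)+1 from by omega]
        rw [show 2*(M+1) = ((2*M)+1)+1 from by omega]
        rw [poch_succ (β/2 - ↑(M+1) + 1) ((2*M)+1), poch_succ' (b - ↑(M+1)) ((2*M)+1)]
        rw [show (b - ↑(M+1) + 1 : ℂ) = β/2 - ↑(M+1) + 1 by rw [hb]]
        simp only [Nat.choose_self, Nat.cast_one, poch]
        simp only [Finset.prod_range_zero]
        push_cast
        ring
      · have hklt : k < M+1 := by omega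
        rw [D1, if_neg hkm]
        have hsplit : M+k = 2*k + (M+1-k-1) := by omega
        rw [hsplit, poch_add]
        rw [show (b - ↑k + 1 + ↑(2*k) : ℂ) = β/2 + k + 1 by rw [hb]; push_cast; ring]
        rw [show (b - ↑k + 1 : ℂ) = β/2 - ↑k + 1 by rw [hb]]
        rw [show M+1+k = (2*k + (M+1-k-1))+1 from by omega, poch_succ']
        rw [show (b - ↑k + 1 : ℂ) = β/2 - ↑k + 1 by rw [hb]] -- maybe already done
        rw [poch_add]
        rw [show (β/2 - ↑k + 1 + ↑(2*k) : ℂ) = β/2 + k + 1 by push_cast; ring]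
        rw [show (lam - β/2 + ↑k + 1 : ℂ) = c + k + 1 by rw [hc]]
        rw [show (b - ↑k : ℂ) = β/2 - ↑k by rw [hb], hb]
        push_cast
        ring
    rw [Finset.sum_congr rfl e, Finset.sum_sub_distrib, ← Finset.mul_sum, ← Finset.mul_sum]
    rw [show M+1+1 = M+2 from rfl] at *
    rw [hW, hF]
    rw [poch_succ' lam M, poch_succ' (β/2) M]
    rw [show (b + 1 : ℂ) = β/2 + 1 by rw [hb], hb]
    push_cast
    ring
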